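/- For every n ≥ k there exists a k-uniform hypergraph H on n vertices with minimum codegree equal to ⌊(n-k)/2⌋ which is not hypergraph connected. -/

import Mathlib

open Finset

/-- A tight walk in a `k`-uniform hypergraph with edge set `E`: a nonempty sequence of
edges in which consecutive edges share `k-1` vertices. -/
def IsTightWalk {V : Type*} [DecidableEq V] (E : Finset (Finset V)) (k : ℕ)
    (W : List (Finset V)) : Prop :=
  W ≠ [] ∧ (∀ e ∈ W, e ∈ E) ∧ W.Chain' (fun e f => (e ∩ f).card = k - 1)

/-- Propagating a property along a chain from the head to the last element. -/
lemma walk_last_aux {α : Type*} (Q : α → Prop) (R : α → α → Prop) (P : α → Prop)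
    (step : ∀ a b, P a → R a b → Q b → P b) :
    ∀ L : List α, L.Chain' R → (∀ e ∈ L, Q e) →
      ∀ x, L.head? = some x → P x → ∀ y, L.getLast? = some y → P y := by
  intro L
  induction L with
  | nil => intro _ _ x hx; simp at hx
  | cons a L ih =>
    intro hc hm x hx hPx y hy
    simp only [List.head?_cons, Option.some.injEq] at hx
    subst hx
    cases L with
    | nil =>
      simp only [List.getLast?_singleton, Option.some.injEq] at hy
      subst hy; exact hPx
    | cons b L' =>
      rw [List.Chain', List.isChain_cons_cons] at hc
      have hPb : P b := step _ b hPx hc.1 (hm b (by simp))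
      exact ih hc.2 (fun e he => hm e (List.mem_cons_of_mem _ he)) b rfl hPb y
        (by rw [List.getLast?_cons_cons] at hy; exact hy)

/-- For every `n ≥ k` there is a `k`-uniform hypergraph on `n` vertices with minimum
codegree equal to `⌊(n-k)/2⌋` which is not hypergraph connected. -/
theorem stmt1 (k n : ℕ) (hk : 2 ≤ k) (hn : k ≤ n) :
    ∃ E : Finset (Finset (Fin n)),
      (∀ e ∈ E, e.card = k) ∧
      (∀ S : Finset (Fin n), S.card = k - 1 →
        (n - k) / 2 ≤ (Finset.univ.filter (fun v => insert v S ∈ E)).card) ∧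
      (∃ S : Finset (Fin n), S.card = k - 1 ∧
        (Finset.univ.filter (fun v => insert v S ∈ E)).card = (n - k) / 2) ∧
      ¬ (∀ A B : Finset (Fin n), A.card = k - 1 → B.card = k - 1 →
          ∃ W : List (Finset (Fin n)), IsTightWalk E k W ∧
            (∃ e₁, W.head? = some e₁ ∧ A ⊆ e₁) ∧
            (∃ e₂, W.getLast? = some e₂ ∧ B ⊆ e₂)) := by
  have hdiv : (n - k) / 2 ≤ n - k := Nat.div_le_self _ _
  set w : ℕ := (n - k) / 2 + 1 with hw_def
  have hwn : w ≤ n := by omega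
  have hWmem : ∀ m ∈ Finset.range w, m < n := fun m hm =>
    lt_of_lt_of_le (mem_range.mp hm) hwn
  set Ws : Finset (Fin n) := Finset.attachFin (Finset.range w) hWmem with hW_def
  have hWcard : Ws.card = w := by rw [hW_def, card_attachFin, card_range]
  have hmemW : ∀ v : Fin n, v ∈ Ws ↔ (v : ℕ) < w := by
    intro v; rw [hW_def, mem_attachFin, mem_range]
  set E : Finset (Finset (Fin n)) :=
    univ.filter (fun e => e.card = k ∧ (e ∩ Ws).card ≠ 1) with hE_def
  have hmemE : ∀ e : Finset (Fin n), e ∈ E ↔ e.card = k ∧ (e ∩ Ws).card ≠ 1 := by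
    intro e; simp [hE_def]
  have insert_card : ∀ (S : Finset (Fin n)) (v : Fin n), S.card = k - 1 → v ∉ S →
      (insert v S).card = k := by
    intro S v hS hv; rw [card_insert_of_notMem hv, hS]; omega
  -- the tight (k-1)-set S₀ : {0} ∪ [w, w+(k-2))
  have h0n : 0 < n := by omega
  have hS0mem : ∀ m ∈ ({0} : Finset ℕ) ∪ Finset.Ico w (w + (k - 2)), m < n := by
    intro m hm
    simp only [mem_union, mem_singleton, mem_Ico] at hm
    omega
  set S₀ : Finset (Fin n) := Finset.attachFin _ hS0mem with hS0_def
  have hmemS0 : ∀ v : Fin n, v ∈ S₀ ↔ ((v : ℕ) = 0 ∨ (w ≤ (v : ℕ) ∧ (v : ℕ) < w + (k - 2))) := by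
    intro v
    rw [hS0_def, mem_attachFin]
    simp [mem_Ico]
  have hS0card : S₀.card = k - 1 := by
    rw [hS0_def, card_attachFin, card_union_of_disjoint, card_singleton, Nat.card_Ico]
    · omega
    · simp only [disjoint_singleton_left, mem_Ico]
      omega
  -- the set B₀ : [w, w+(k-1)), disjoint from Ws
  have hB0mem : ∀ m ∈ Finset.Ico w (w + (k - 1)), m < n := by
    intro m hm; simp only [mem_Ico] at hm; omega
  set B₀ : Finset (Fin n) := Finset.attachFin _ hB0mem with hB0_def
  have hmemB0 : ∀ v : Fin n, v ∈ B₀ ↔ (w ≤ (v : ℕ) ∧ (v : ℕ) < w + (k - 1)) := by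
    intro v; rw [hB0_def, mem_attachFin, mem_Ico]
  have hB0card : B₀.card = k - 1 := by
    rw [hB0_def, card_attachFin, Nat.card_Ico]; omega
  refine ⟨E, fun e he => ((hmemE e).mp he).1, ?_, ?_, ?_⟩
  · -- minimum codegree lower bound
    intro S hS
    rcases Nat.lt_or_ge (S ∩ Ws).card 1 with ha | ha
    · -- |S ∩ Ws| = 0 : all vertices outside S ∪ Ws work
      have ha0 : (S ∩ Ws).card = 0 := by omega
      have hsub : (S ∪ Ws)ᶜ ⊆ univ.filter (fun v => insert v S ∈ E) := by
        intro v hv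
        rw [mem_compl, mem_union, not_or] at hv
        refine mem_filter.mpr ⟨mem_univ _, (hmemE _).mpr ⟨insert_card S v hS hv.1, ?_⟩⟩
        rw [insert_inter_of_notMem hv.2, ha0]
        omega
      have hcard := card_le_card hsub
      rw [card_compl, Fintype.card_fin] at hcard
      have hle : (S ∪ Ws).card ≤ (k - 1) + w := by
        calc (S ∪ Ws).card ≤ S.card + Ws.card := card_union_le _ _
        _ = (k - 1) + w := by rw [hS, hWcard]
      omega
    rcases Nat.lt_or_ge (S ∩ Ws).card 2 with ha2 | ha2
    · -- |S ∩ Ws| = 1 : vertices of Ws \ S work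
      have ha1 : (S ∩ Ws).card = 1 := by omega
      have hsub : Ws \ S ⊆ univ.filter (fun v => insert v S ∈ E) := by
        intro v hv
        rw [mem_sdiff] at hv
        refine mem_filter.mpr ⟨mem_univ _, (hmemE _).mpr ⟨insert_card S v hS hv.2, ?_⟩⟩
        rw [insert_inter_of_mem hv.1,
          card_insert_of_notMem (fun h => hv.2 (mem_of_mem_inter_left h)), ha1]
        omega
      have hcard := card_le_card hsub
      have h2 := card_sdiff_add_card_inter Ws S
      rw [inter_comm] at ha1
      omega
    · -- |S ∩ Ws| ≥ 2 : every vertex outside S works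
      have hsub : Sᶜ ⊆ univ.filter (fun v => insert v S ∈ E) := by
        intro v hv
        rw [mem_compl] at hv
        refine mem_filter.mpr ⟨mem_univ _, (hmemE _).mpr ⟨insert_card S v hS hv, ?_⟩⟩
        have : S ∩ Ws ⊆ insert v S ∩ Ws :=
          inter_subset_inter (subset_insert _ _) (Subset.refl _)
        have := card_le_card this
        omega
      have hcard := card_le_card hsub
      rw [card_compl, Fintype.card_fin, hS] at hcard
      omega
  · -- the tight set
    refine ⟨S₀, hS0card, ?_⟩
    have hfe : univ.filter (fun v => insert v S₀ ∈ E) = Ws \ S₀ := by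
      ext v
      simp only [mem_filter, mem_univ, true_and, mem_sdiff, hmemE]
      constructor
      · rintro ⟨hcard, hne⟩
        have hvS : v ∉ S₀ := by
          intro hv
          rw [insert_eq_self.mpr hv, hS0card] at hcard
          omega
        refine ⟨?_, hvS⟩
        by_contra hvW
        rw [insert_inter_of_notMem hvW] at hne
        apply hne
        -- (S₀ ∩ Ws).card = 1
        have : S₀ ∩ Ws = {(⟨0, h0n⟩ : Fin n)} := by
          ext u
          simp only [mem_inter, hmemS0, hmemW, mem_singleton, Fin.ext_iff]
          omega
        rw [this, card_singleton]
      · rintro ⟨hvW, hvS⟩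
        refine ⟨insert_card S₀ v hS0card hvS, ?_⟩
        rw [insert_inter_of_mem hvW,
          card_insert_of_notMem (fun h => hvS (mem_of_mem_inter_left h))]
        have hSW : S₀ ∩ Ws = {(⟨0, h0n⟩ : Fin n)} := by
          ext u
          simp only [mem_inter, hmemS0, hmemW, mem_singleton, Fin.ext_iff]
          omega
        rw [hSW, card_singleton]
        omega
    rw [hfe]
    have h2 := card_sdiff_add_card_inter Ws S₀
    have hWS : (Ws ∩ S₀).card = 1 := by
      rw [inter_comm]
      have : S₀ ∩ Ws = {(⟨0, h0n⟩ : Fin n)} := by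
        ext u
        simp only [mem_inter, hmemS0, hmemW, mem_singleton, Fin.ext_iff]
        omega
      rw [this, card_singleton]
    omega
  · -- not connected
    intro hcon
    obtain ⟨L, ⟨hne, hmem, hchain⟩, ⟨e₁, hh, hA⟩, ⟨e₂, hl, hB⟩⟩ := hcon S₀ B₀ hS0card hB0card
    -- P e : e ∈ E and meets Ws in at least 2 vertices
    have hstep : ∀ a b : Finset (Fin n),
        (a ∈ E ∧ 2 ≤ (a ∩ Ws).card) → (a ∩ b).card = k - 1 → b ∈ E →
        (b ∈ E ∧ 2 ≤ (b ∩ Ws).card) := by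
      rintro a b ⟨haE, ha2⟩ hab hbE
      refine ⟨hbE, ?_⟩
      have hak : a.card = k := ((hmemE a).mp haE).1
      have hbne : (b ∩ Ws).card ≠ 1 := ((hmemE b).mp hbE).2
      have hsdiff : (a \ b).card + (a ∩ b).card = a.card := card_sdiff_add_card_inter a b
      have hsub : a ∩ Ws ⊆ (a ∩ b ∩ Ws) ∪ (a \ b) := by
        intro v hv
        rw [mem_inter] at hv
        rw [mem_union, mem_inter, mem_inter, mem_sdiff]
        by_cases hvb : v ∈ b
        · exact Or.inl ⟨⟨hv.1, hvb⟩, hv.2⟩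
        · exact Or.inr ⟨hv.1, hvb⟩
      have h1 := card_le_card hsub
      have h2 := card_union_le (a ∩ b ∩ Ws) (a \ b)
      have h3 : a ∩ b ∩ Ws ⊆ b ∩ Ws :=
        inter_subset_inter inter_subset_right (Subset.refl _)
      have h4 := card_le_card h3
      omega
    have he₁L : e₁ ∈ L := List.mem_of_mem_head? (by rw [hh]; rfl)
    have he₂L : e₂ ∈ L := List.mem_of_mem_getLast? (by rw [hl]; rfl)
    have hP1 : e₁ ∈ E ∧ 2 ≤ (e₁ ∩ Ws).card := by
      refine ⟨hmem e₁ he₁L, ?_⟩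
      have h1 : ({(⟨0, h0n⟩ : Fin n)} : Finset (Fin n)) ⊆ e₁ ∩ Ws := by
        intro u hu
        rw [mem_singleton] at hu
        subst hu
        refine mem_inter.mpr ⟨hA ((hmemS0 _).mpr (Or.inl rfl)), (hmemW _).mpr ?_⟩
        simp [hw_def]
      have := card_le_card h1
      rw [card_singleton] at this
      have hne1 : (e₁ ∩ Ws).card ≠ 1 := ((hmemE e₁).mp (hmem e₁ he₁L)).2
      omega
    have hP2 := walk_last_aux (· ∈ E) _ _ hstep L hchain hmem e₁ hh hP1 e₂ hl
    -- but e₂ ⊇ B₀ forces (e₂ ∩ Ws).card ≤ 1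
    have he₂k : e₂.card = k := ((hmemE e₂).mp hP2.1).1
    have hsub2 : e₂ ∩ Ws ⊆ e₂ \ B₀ := by
      intro v hv
      rw [mem_inter] at hv
      rw [mem_sdiff]
      refine ⟨hv.1, fun hvB => ?_⟩
      have h1 := (hmemW v).mp hv.2
      have h2 := (hmemB0 v).mp hvB
      omega
    have h5 := card_le_card hsub2
    rw [card_sdiff_of_subset hB, he₂k, hB0card] at h5
    omega
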